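/- Let (P, ≺) be a generalised path. Then between any two vertices v ≺ w of P there exists a finite path in the graph P from v to w whose vertices are strictly increasing with respect to ≺. -/

import Mathlib

open Cardinal

universe u

/-- A generalised path structure on the whole vertex set of `G`: a well-order `r`
such that every vertex's down-neighbours are cofinal below it. -/
def IsGenPath {V : Type*} (G : SimpleGraph V) (r : V → V → Prop) : Prop :=
  IsWellOrder V r ∧ ∀ v v' : V, r v' v → ∃ w : V, G.Adj v w ∧ r w v ∧ ¬ r w v'

/-- A generalised path in `G` with vertex set `S` and path order `r`. -/
def IsGenPathRel {V : Type*} (G : SimpleGraph V) (S : Set V) (r : S → S → Prop) : Prop :=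
  IsWellOrder S r ∧
    ∀ v v' : S, r v' v → ∃ w : S, G.Adj (v : V) (w : V) ∧ r w v ∧ ¬ r w v'

open Classical in
noncomputable def relType {α : Type u} (r : α → α → Prop) : Ordinal.{u} :=
  if h : IsWellOrder α r then @Ordinal.type α r h else 0

/-- `v` is a limit element of the order `r` : neither minimal nor a successor. -/
def IsLimitElem {α : Type*} (r : α → α → Prop) (v : α) : Prop :=
  (∃ w, r w v) ∧ ∀ w, r w v → ∃ u, r w u ∧ r u v

/-- The set of limit elements of a path order on `S`, as a subset of the ambient vertex set. -/
def LimitSet {V : Type*} (S : Set V) (r : S → S → Prop) : Set V :=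
  {v | ∃ h : v ∈ S, IsLimitElem r ⟨v, h⟩}

/-- `A` is `κ`-star-linked in `B`: every finite subset of `A` has common
neighbourhood of cardinality `κ` inside `B`. -/
def StarLinked {V : Type*} (G : SimpleGraph V) (κ : Cardinal) (A B : Set V) : Prop :=
  ∀ F : Finset V, ↑F ⊆ A → #{b : V | b ∈ B ∧ ∀ v ∈ F, G.Adj v b} = κ

/-- The spanning subgraph of `G` consisting of the edges of colour `i`. -/
def colourSub {V : Type*} (G : SimpleGraph V) {n : ℕ} (c : V → V → Fin n) (i : Fin n) :
    SimpleGraph V where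
  Adj u v := G.Adj u v ∧ c u v = i ∧ c v u = i
  symm := ⟨by rintro u v ⟨h, h1, h2⟩; exact ⟨h.symm, h2, h1⟩⟩
  loopless := ⟨by rintro v ⟨h, -⟩; exact G.loopless.irrefl v h⟩

/-- `A` is `κ`-star-linked in `B` in colour `i`. -/
def StarLinkedC {V : Type*} (G : SimpleGraph V) {n : ℕ} (c : V → V → Fin n) (i : Fin n)
    (κ : Cardinal) (A B : Set V) : Prop :=
  StarLinked (colourSub G c i) κ A B

/-- `G` is a graph of type `H_{κ,κ}` with main class `A` and second class `B`. -/
def IsTypeH {V : Type u} (κ : Cardinal.{u}) (G : SimpleGraph V) (A B : Set V) : Prop :=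
  A ∪ B = Set.univ ∧
    ∃ (ι : Type u) (_ : LinearOrder ι) (a b : ι → V),
      relType ((· < ·) : ι → ι → Prop) = κ.ord ∧
      A = Set.range a ∧ B = Set.range b ∧
      ∀ ξ ζ : ι, ξ ≤ ζ → a ξ ≠ b ζ → G.Adj (a ξ) (b ζ)

/-- `U` is `<κ`-inseparable in `H`: no two of its vertices can be separated by
deleting fewer than `κ` vertices. -/
def Insep {V : Type*} (κ : Cardinal) (H : SimpleGraph V) (U : Set V) : Prop :=
  ∀ u ∈ U, ∀ v ∈ U, u ≠ v → ∀ W : Set V, #W < κ →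
    ∀ (hu : u ∉ W) (hv : v ∉ W), (H.induce Wᶜ).Reachable ⟨u, hu⟩ ⟨v, hv⟩

/-- The bipartite subgraph of `G` consisting of the edges between `S` and `T`. -/
def between {V : Type*} (G : SimpleGraph V) (S T : Set V) : SimpleGraph V where
  Adj u v := G.Adj u v ∧ ((u ∈ S ∧ v ∈ T) ∨ (u ∈ T ∧ v ∈ S))
  symm := ⟨by rintro u v ⟨h, h'⟩; exact ⟨h.symm, h'.symm.imp And.symm And.symm⟩⟩
  loopless := ⟨by rintro v ⟨h, -⟩; exact G.loopless.irrefl v h⟩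

/-- between any two vertices `v ≺ w` of a generalised path there is a
finite path from `v` to `w` strictly increasing with respect to `≺`. -/
theorem stmt1 {V : Type*} (G : SimpleGraph V) (r : V → V → Prop)
    (hP : IsGenPath G r) (v w : V) (hvw : r v w) :
    ∃ p : G.Walk v w, p.IsPath ∧ List.Chain' r p.support := by
  obtain ⟨hwo, hcof⟩ := hP
  haveI := hwo
  have key : ∀ w v, r v w → ∃ p : G.Walk v w, p.IsPath ∧ List.Chain' r p.support ∧
      ∀ x ∈ p.support, x = w ∨ r x w := by
    intro w
    induction w using (IsWellFounded.wf (r := r)).induction with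
    | _ w IH =>
      intro v hvw
      obtain ⟨u, hadj, huw, hnuv⟩ := hcof w v hvw
      rcases (trichotomous_of r u v).resolve_left hnuv with hvu | hvu
      · subst hvu
        refine ⟨SimpleGraph.Walk.cons hadj.symm SimpleGraph.Walk.nil, ?_, ?_, ?_⟩
        · rw [SimpleGraph.Walk.isPath_def]
          have hne : u ≠ w := fun h => irrefl_of r w (h ▸ hvw)
          simp [hne]
        · exact List.isChain_pair.mpr hvw
        · intro x hx
          simp only [SimpleGraph.Walk.support_cons, SimpleGraph.Walk.support_nil,
            List.mem_cons, List.mem_singleton] at hx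
          rcases hx with rfl | rfl | h
          · exact Or.inr hvw
          · exact Or.inl rfl
          · exact absurd h List.not_mem_nil
      · obtain ⟨p, hp, hchain, hbd⟩ := IH u huw v hvu
        have hle : ∀ x ∈ p.support, r x w := by
          intro x hx
          rcases hbd x hx with rfl | h
          · exact huw
          · exact trans_of r h huw
        have hwns : w ∉ p.support := fun h => irrefl_of r w (hle w h)
        refine ⟨p.concat hadj.symm, ?_, ?_, ?_⟩
        · rw [SimpleGraph.Walk.isPath_def, SimpleGraph.Walk.support_concat,
            List.nodup_append]
          exact ⟨(SimpleGraph.Walk.isPath_def _).mp hp, List.nodup_singleton w,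
            by rintro x hx y hy rfl; rw [List.mem_singleton] at hy; subst hy; exact hwns hx⟩
        · rw [SimpleGraph.Walk.support_concat, List.Chain',
            List.isChain_iff_pairwise, List.pairwise_append]
          refine ⟨List.isChain_iff_pairwise.mp hchain, List.pairwise_singleton _ _, ?_⟩
          intro x hx y hy
          rw [List.mem_singleton] at hy
          exact hy ▸ hle x hx
        · intro x hx
          rw [SimpleGraph.Walk.support_concat, List.mem_append,
            List.mem_singleton] at hx
          rcases hx with hx | rfl
          · exact Or.inr (hle x hx)
          · exact Or.inl rfl
  obtain ⟨p, hp, hc, -⟩ := key w v hvw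
  exact ⟨p, hp, hc⟩
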